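/- Let p_{XYZ} be such that p_{XY|Z=z'} is perfectly correlated (p(x,y|z') = p(x|z') δ_{x,y} after relabeling) for some z', and p_{XY|Z=z} is a product distribution for some z ≠ z', with supp[p_{X|Z=z}] ⊆ supp[p_{X|Z=z'}] or supp[p_{Y|Z=z}] ⊆ supp[p_{Y|Z=z'}]. If there exists (x,y) with p(x,y|z) > 0 and p(x|z') p(y|z') > 0 but p(x,y|z') = 0, then the intrinsic information satisfies I(X:Y↓Z) < I(X:Y|Z). -/

import Mathlib

open Finset Set

def IsProb {Ω : Type*} [Fintype Ω] (p : Ω → ℝ) : Prop :=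
  (∀ ω, 0 ≤ p ω) ∧ ∑ ω, p ω = 1

noncomputable def margX {𝒳 𝒴 : Type*} [Fintype 𝒴] (w : 𝒳 × 𝒴 → ℝ) (x : 𝒳) : ℝ :=
  ∑ y, w (x, y)

noncomputable def margY {𝒳 𝒴 : Type*} [Fintype 𝒳] (w : 𝒳 × 𝒴 → ℝ) (y : 𝒴) : ℝ :=
  ∑ x, w (x, y)

/-- Mutual information of a joint distribution on `𝒳 × 𝒴`. -/
noncomputable def mutInfo {𝒳 𝒴 : Type*} [Fintype 𝒳] [Fintype 𝒴] (q : 𝒳 × 𝒴 → ℝ) : ℝ :=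
  ∑ x, ∑ y, q (x, y) * Real.log (q (x, y) / (margX q x * margY q y))

/-- Entropy of a distribution on a finite type. -/
noncomputable def ent1 {A : Type*} [Fintype A] (d : A → ℝ) : ℝ :=
  ∑ a, Real.negMulLog (d a)

/-- Conditional mutual information `I(X:Y|Z)` of a joint distribution on `𝒳 × 𝒴 × 𝒵`. -/
noncomputable def cmi3 {𝒳 𝒴 𝒵 : Type*} [Fintype 𝒳] [Fintype 𝒴] [Fintype 𝒵]
    (q : 𝒳 × 𝒴 × 𝒵 → ℝ) : ℝ :=
  ent1 (fun xz : 𝒳 × 𝒵 => ∑ y, q (xz.1, y, xz.2)) +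
    ent1 (fun yz : 𝒴 × 𝒵 => ∑ x, q (x, yz.1, yz.2)) -
    ent1 q - ent1 (fun z : 𝒵 => ∑ x, ∑ y, q (x, y, z))

/-- A channel (stochastic matrix) from `𝒵` to `𝒵`. -/
def IsChannel {𝒵 : Type*} [Fintype 𝒵] (c : 𝒵 → 𝒵 → ℝ) : Prop :=
  (∀ z z', 0 ≤ c z z') ∧ ∀ z, ∑ z', c z z' = 1

/-- The joint distribution of `(X,Y,Z̄)` induced by applying a channel to `Z`. -/
noncomputable def applyChannel {𝒳 𝒴 𝒵 : Type*} [Fintype 𝒵]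
    (q : 𝒳 × 𝒴 × 𝒵 → ℝ) (c : 𝒵 → 𝒵 → ℝ) : 𝒳 × 𝒴 × 𝒵 → ℝ :=
  fun a => ∑ z, q (a.1, a.2.1, z) * c z a.2.2


section Aux
open Real Finset


-- log x ≥ 1 - 1/x for x > 0
lemma log_ge_one_sub_inv {x : ℝ} (hx : 0 < x) : 1 - x⁻¹ ≤ Real.log x := by
  have h := Real.log_le_sub_one_of_pos (x := x⁻¹) (by positivity)
  rw [Real.log_inv] at h
  linarith

-- ψ lower bound: negMulLog (a+c) - negMulLog a ≥ -c*(1 + log (a+c))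
lemma psi_lower {a c : ℝ} (ha : 0 ≤ a) (hc : 0 ≤ c) :
    -(c * (1 + Real.log (a + c))) ≤ Real.negMulLog (a + c) - Real.negMulLog a := by
  rcases eq_or_lt_of_le ha with h0 | ha'
  · -- a = 0
    simp only [← h0, zero_add, Real.negMulLog_zero, sub_zero, Real.negMulLog]
    nlinarith [hc]
  · have key : a * Real.log ((a + c) / a) ≤ c := by
      have h := Real.log_le_sub_one_of_pos (x := (a + c) / a) (by positivity)
      have : (a + c) / a - 1 = c / a := by field_simp; ring
      rw [this] at h
      calc a * Real.log ((a + c) / a) ≤ a * (c / a) := by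
            exact mul_le_mul_of_nonneg_left h ha
        _ = c := by field_simp
    have hac : 0 < a + c := by linarith
    have hlog : Real.log ((a + c) / a) = Real.log (a + c) - Real.log a :=
      Real.log_div (by positivity) (ne_of_gt ha')
    simp only [Real.negMulLog]
    nlinarith [key, hlog]

-- ψ upper bound (nonsingular): a > 0, c ≥ 0 ⟹ negMulLog (a+c) - negMulLog a ≤ -c*(1+log a)
lemma psi_upper {a c : ℝ} (ha : 0 < a) (hc : 0 ≤ c) :
    Real.negMulLog (a + c) - Real.negMulLog a ≤ -(c * (1 + Real.log a)) := by
  have hac : 0 < a + c := by linarith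
  have h1 : c / (a + c) ≤ Real.log (a + c) - Real.log a := by
    have h := log_ge_one_sub_inv (x := (a + c) / a) (by positivity)
    have h2 : Real.log ((a + c) / a) = Real.log (a + c) - Real.log a :=
      Real.log_div (by positivity) (ne_of_gt ha)
    have h3 : ((a + c) / a)⁻¹ = a / (a + c) := by
      rw [inv_div]
    rw [h2, h3] at h
    have : 1 - a / (a + c) = c / (a + c) := by field_simp; ring
    linarith [this ▸ h]
  have h4 : c ≤ (a + c) * (Real.log (a + c) - Real.log a) := by
    have := mul_le_mul_of_nonneg_left h1 (le_of_lt hac)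
    calc c = (a + c) * (c / (a + c)) := by field_simp
      _ ≤ (a + c) * (Real.log (a + c) - Real.log a) := this
  simp only [Real.negMulLog]
  nlinarith [h4]

-- negMulLog t ≤ exp (-1) for t ≥ 0
lemma negMulLog_le_exp_neg_one {t : ℝ} (ht : 0 ≤ t) : Real.negMulLog t ≤ Real.exp (-1) := by
  rcases eq_or_lt_of_le ht with h0 | ht'
  · simp [← h0]; positivity
  · have h := Real.log_le_sub_one_of_pos (x := Real.exp (-1) / t) (by positivity)
    rw [Real.log_div (by positivity) (ne_of_gt ht'), Real.log_exp] at h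
    have : -1 - Real.log t ≤ Real.exp (-1) / t - 1 := h
    have h2 : -Real.log t ≤ Real.exp (-1) / t := by linarith
    have := mul_le_mul_of_nonneg_left h2 (le_of_lt ht')
    simp only [Real.negMulLog, neg_mul]
    calc -(t * Real.log t) = t * (-Real.log t) := by ring
      _ ≤ t * (Real.exp (-1) / t) := this
      _ = Real.exp (-1) := by field_simp

-- subadditivity of negMulLog (two terms)
lemma negMulLog_add_le {a b : ℝ} (ha : 0 ≤ a) (hb : 0 ≤ b) :
    Real.negMulLog (a + b) ≤ Real.negMulLog a + Real.negMulLog b := by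
  simp only [Real.negMulLog, neg_mul]
  have h1 : a * Real.log a ≤ a * Real.log (a + b) := by
    rcases eq_or_lt_of_le ha with h0 | ha'
    · simp [← h0]
    · exact mul_le_mul_of_nonneg_left (Real.log_le_log ha' (by linarith)) ha
  have h2 : b * Real.log b ≤ b * Real.log (a + b) := by
    rcases eq_or_lt_of_le hb with h0 | hb'
    · simp [← h0]
    · exact mul_le_mul_of_nonneg_left (Real.log_le_log hb' (by linarith)) hb
  nlinarith

-- subadditivity over Finset sums
lemma negMulLog_sum_le {ι : Type*} (s : Finset ι) (f : ι → ℝ) (hf : ∀ i ∈ s, 0 ≤ f i) :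
    Real.negMulLog (∑ i ∈ s, f i) ≤ ∑ i ∈ s, Real.negMulLog (f i) := by
  induction s using Finset.cons_induction with
  | empty => simp
  | cons a s ha ih =>
    rw [Finset.sum_cons, Finset.sum_cons]
    calc Real.negMulLog (f a + ∑ i ∈ s, f i)
        ≤ Real.negMulLog (f a) + Real.negMulLog (∑ i ∈ s, f i) :=
          negMulLog_add_le (hf a (Finset.mem_cons_self a s))
            (Finset.sum_nonneg fun i hi => hf i (Finset.mem_cons_of_mem hi))
      _ ≤ _ := by
          have := ih (fun i hi => hf i (Finset.mem_cons_of_mem hi))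
          linarith

lemma neg_psi_le {a b ε : ℝ} (ha : 0 ≤ a) (hb : 0 ≤ b) (hε : 0 < ε) (hε1 : ε ≤ 1) :
    -(Real.negMulLog (a + ε * b) - Real.negMulLog a) ≤ ε * (b * (1 + |Real.log (a + b)|)) := by
  rcases eq_or_lt_of_le hb with h0 | hb'
  · simp [← h0]
  · have h1 := psi_lower (a := a) (c := ε * b) ha (by positivity)
    have hlog : Real.log (a + ε * b) ≤ Real.log (a + b) := by
      apply Real.log_le_log (by positivity)
      nlinarith
    have h2 : Real.log (a + b) ≤ |Real.log (a + b)| := le_abs_self _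
    have hεb : 0 ≤ ε * b := by positivity
    calc -(Real.negMulLog (a + ε * b) - Real.negMulLog a)
        ≤ ε * b * (1 + Real.log (a + ε * b)) := by linarith
      _ ≤ ε * b * (1 + |Real.log (a + b)|) := by
          apply mul_le_mul_of_nonneg_left _ hεb
          linarith
      _ = ε * (b * (1 + |Real.log (a + b)|)) := by ring

lemma psi_le {a b ε : ℝ} (ha : 0 < a) (hb : 0 ≤ b) (hε : 0 ≤ ε) :
    Real.negMulLog (a + ε * b) - Real.negMulLog a ≤ ε * (b * (1 + |Real.log a|)) := by
  have h1 := psi_upper (a := a) (c := ε * b) ha (by positivity)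
  have hεb : 0 ≤ ε * b := by positivity
  calc Real.negMulLog (a + ε * b) - Real.negMulLog a
      ≤ -(ε * b * (1 + Real.log a)) := h1
    _ = ε * b * (-1 - Real.log a) := by ring
    _ ≤ ε * b * (1 + |Real.log a|) := by
        apply mul_le_mul_of_nonneg_left _ hεb
        have := neg_le_abs (Real.log a)
        linarith
    _ = ε * (b * (1 + |Real.log a|)) := by ring

lemma key {𝒳 𝒴 : Type*} [Fintype 𝒳] [Fintype 𝒴]
    (r m : 𝒳 → 𝒴 → ℝ) (hr : ∀ x y, 0 ≤ r x y) (hm : ∀ x y, 0 ≤ m x y)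
    (x₀ : 𝒳) (y₀ : 𝒴) (hr₀ : 0 < r x₀ y₀) (hm₀ : m x₀ y₀ = 0)
    (hdy₀ : 0 < ∑ x, m x y₀)
    (hsX : ∀ x, 0 < ∑ y, r x y → 0 < ∑ y, m x y) :
    ∃ ε : ℝ, 0 < ε ∧ ε ≤ 1 ∧
      ((∑ x, (Real.negMulLog ((∑ y, m x y) + ε * ∑ y, r x y) - Real.negMulLog (∑ y, m x y)))
      + (∑ y, (Real.negMulLog ((∑ x, m x y) + ε * ∑ x, r x y) - Real.negMulLog (∑ x, m x y)))
      - (∑ x, ∑ y, (Real.negMulLog (m x y + ε * r x y) - Real.negMulLog (m x y)))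
      - (Real.negMulLog ((∑ x, ∑ y, m x y) + ε * ∑ x, ∑ y, r x y)
          - Real.negMulLog (∑ x, ∑ y, m x y))) < 0 := by
  classical
  have hf0 : ∀ x, 0 ≤ ∑ y, r x y := fun x => Finset.sum_nonneg fun y _ => hr x y
  have hg0 : ∀ y, 0 ≤ ∑ x, r x y := fun y => Finset.sum_nonneg fun x _ => hr x y
  have hdx0 : ∀ x, 0 ≤ ∑ y, m x y := fun x => Finset.sum_nonneg fun y _ => hm x y
  have hdy0 : ∀ y, 0 ≤ ∑ x, m x y := fun y => Finset.sum_nonneg fun x _ => hm x y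
  have hs0 : 0 ≤ ∑ x, ∑ y, r x y := Finset.sum_nonneg fun x _ => hf0 x
  have ht0 : 0 ≤ ∑ x, ∑ y, m x y := Finset.sum_nonneg fun x _ => hdx0 x
  set r₀ : ℝ := r x₀ y₀ with hr0def
  set C : ℝ := (∑ x, (∑ y, r x y) * (1 + |Real.log (∑ y, m x y)|))
      + (∑ x, ∑ y, r x y) * (1 + |Real.log ((∑ x, ∑ y, m x y) + ∑ x, ∑ y, r x y)|)
      + (∑ y, ((∑ x, r x y) * (1 + |Real.log (∑ x, m x y)|)
          + ∑ x, r x y * (1 + |Real.log (m x y + r x y)|)))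
      + r₀ * |Real.log r₀| with hC
  refine ⟨min 1 (Real.exp (-(C + 1) / r₀)), lt_min one_pos (Real.exp_pos _), min_le_left _ _, ?_⟩
  set ε : ℝ := min 1 (Real.exp (-(C + 1) / r₀)) with hεdef
  have hε : 0 < ε := lt_min one_pos (Real.exp_pos _)
  have hε1 : ε ≤ 1 := min_le_left _ _
  have hT1 : (∑ x, (Real.negMulLog ((∑ y, m x y) + ε * ∑ y, r x y)
        - Real.negMulLog (∑ y, m x y)))
      ≤ ε * ∑ x, (∑ y, r x y) * (1 + |Real.log (∑ y, m x y)|) := by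
    rw [Finset.mul_sum]
    apply Finset.sum_le_sum
    intro x _
    rcases eq_or_lt_of_le (hf0 x) with h0 | hfx
    · simp [← h0]
    · exact psi_le (hsX x hfx) (hf0 x) hε.le
  have hT4 : -(Real.negMulLog ((∑ x, ∑ y, m x y) + ε * ∑ x, ∑ y, r x y)
        - Real.negMulLog (∑ x, ∑ y, m x y))
      ≤ ε * ((∑ x, ∑ y, r x y)
          * (1 + |Real.log ((∑ x, ∑ y, m x y) + ∑ x, ∑ y, r x y)|)) :=
    neg_psi_le ht0 hs0 hε hε1
  have hrow : ∀ y, (Real.negMulLog ((∑ x, m x y) + ε * ∑ x, r x y)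
        - Real.negMulLog (∑ x, m x y))
      - (∑ x, (Real.negMulLog (m x y + ε * r x y) - Real.negMulLog (m x y)))
      ≤ ε * ((∑ x, r x y) * (1 + |Real.log (∑ x, m x y)|)
          + ∑ x, r x y * (1 + |Real.log (m x y + r x y)|))
        + (if y = y₀ then ε * (r₀ * Real.log ε + r₀ * |Real.log r₀|) else 0) := by
    intro y
    by_cases hdyy : (∑ x, m x y) = 0
    · have hy0 : y ≠ y₀ := by
        intro h; subst h; exact absurd hdyy (ne_of_gt hdy₀)
      rw [if_neg hy0, add_zero]
      have hmz : ∀ x, m x y = 0 := by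
        intro x
        exact (Finset.sum_eq_zero_iff_of_nonneg (fun x _ => hm x y)).mp hdyy x
          (Finset.mem_univ x)
      have hgy : (∑ x, m x y) + ε * ∑ x, r x y = ∑ x, (m x y + ε * r x y) := by
        rw [Finset.sum_add_distrib, ← Finset.mul_sum]
      have hle : Real.negMulLog ((∑ x, m x y) + ε * ∑ x, r x y)
          ≤ ∑ x, Real.negMulLog (m x y + ε * r x y) := by
        rw [hgy]
        exact negMulLog_sum_le _ _ (fun x _ => by
          have := hm x y; have := hr x y; positivity)
      have hpos : 0 ≤ ε * ((∑ x, r x y) * (1 + |Real.log (∑ x, m x y)|)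
          + ∑ x, r x y * (1 + |Real.log (m x y + r x y)|)) := by
        apply mul_nonneg hε.le
        apply add_nonneg
        · exact mul_nonneg (hg0 y) (by positivity)
        · exact Finset.sum_nonneg fun x _ => mul_nonneg (hr x y) (by positivity)
      have heq : (∑ x, (Real.negMulLog (m x y + ε * r x y) - Real.negMulLog (m x y)))
          = ∑ x, Real.negMulLog (m x y + ε * r x y) := by
        apply Finset.sum_congr rfl
        intro x _; rw [hmz x]; simp
      have hdyy' : Real.negMulLog (∑ x, m x y) = 0 := by rw [hdyy]; simp
      rw [heq, hdyy']
      linarith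
    · have hdyy' : 0 < ∑ x, m x y := lt_of_le_of_ne (hdy0 y) (Ne.symm hdyy)
      have hgb : Real.negMulLog ((∑ x, m x y) + ε * ∑ x, r x y)
            - Real.negMulLog (∑ x, m x y)
          ≤ ε * ((∑ x, r x y) * (1 + |Real.log (∑ x, m x y)|)) :=
        psi_le hdyy' (hg0 y) hε.le
      by_cases hy0 : y = y₀
      · rw [if_pos hy0]
        have hm₀y : m x₀ y = 0 := by rw [hy0]; exact hm₀
        have hr₀y : r₀ = r x₀ y := by rw [hr0def, hy0]
        have hsplit : (∑ x, (Real.negMulLog (m x y + ε * r x y) - Real.negMulLog (m x y)))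
            = (Real.negMulLog (m x₀ y + ε * r x₀ y) - Real.negMulLog (m x₀ y))
              + ∑ x ∈ Finset.univ.erase x₀,
                  (Real.negMulLog (m x y + ε * r x y) - Real.negMulLog (m x y)) :=
          (Finset.add_sum_erase _ _ (Finset.mem_univ x₀)).symm
        have hx₀term : -(Real.negMulLog (m x₀ y + ε * r x₀ y) - Real.negMulLog (m x₀ y))
            ≤ ε * (r₀ * Real.log ε + r₀ * |Real.log r₀|) := by
          rw [hm₀y, zero_add]
          simp only [Real.negMulLog_zero, sub_zero]
          rw [← hr₀y, Real.negMulLog_mul]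
          have h1 : -Real.negMulLog r₀ ≤ r₀ * |Real.log r₀| := by
            simp only [Real.negMulLog, neg_mul, neg_neg]
            exact mul_le_mul_of_nonneg_left (le_abs_self _) hr₀.le
          have h2 : -(r₀ * Real.negMulLog ε) = r₀ * (ε * Real.log ε) := by
            simp only [Real.negMulLog, neg_mul]; ring
          nlinarith [hr₀.le, hε.le]
        have hrest : -(∑ x ∈ Finset.univ.erase x₀,
              (Real.negMulLog (m x y + ε * r x y) - Real.negMulLog (m x y)))
            ≤ ε * ∑ x, r x y * (1 + |Real.log (m x y + r x y)|) := by
          rw [← Finset.sum_neg_distrib]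
          calc (∑ x ∈ Finset.univ.erase x₀,
                -(Real.negMulLog (m x y + ε * r x y) - Real.negMulLog (m x y)))
              ≤ ∑ x ∈ Finset.univ.erase x₀, ε * (r x y * (1 + |Real.log (m x y + r x y)|)) :=
                Finset.sum_le_sum fun x _ => neg_psi_le (hm x y) (hr x y) hε hε1
            _ ≤ ∑ x, ε * (r x y * (1 + |Real.log (m x y + r x y)|)) := by
                apply Finset.sum_le_sum_of_subset_of_nonneg (Finset.subset_univ _)
                intro x _ _
                have := hm x y; have := hr x y
                positivity
            _ = ε * ∑ x, r x y * (1 + |Real.log (m x y + r x y)|) := by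
                rw [Finset.mul_sum]
        rw [hsplit, mul_add]
        linarith
      · rw [if_neg hy0, add_zero]
        have hrest : -(∑ x, (Real.negMulLog (m x y + ε * r x y) - Real.negMulLog (m x y)))
            ≤ ε * ∑ x, r x y * (1 + |Real.log (m x y + r x y)|) := by
          rw [Finset.mul_sum, ← Finset.sum_neg_distrib]
          apply Finset.sum_le_sum
          intro x _
          exact neg_psi_le (hm x y) (hr x y) hε hε1
        rw [mul_add]
        linarith
  -- sum the rows
  have hT23 : (∑ y, (Real.negMulLog ((∑ x, m x y) + ε * ∑ x, r x y)
        - Real.negMulLog (∑ x, m x y)))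
      - (∑ y, ∑ x, (Real.negMulLog (m x y + ε * r x y) - Real.negMulLog (m x y)))
      ≤ ε * (∑ y, ((∑ x, r x y) * (1 + |Real.log (∑ x, m x y)|)
          + ∑ x, r x y * (1 + |Real.log (m x y + r x y)|)))
        + ε * (r₀ * Real.log ε + r₀ * |Real.log r₀|) := by
    rw [← Finset.sum_sub_distrib]
    calc (∑ y, ((Real.negMulLog ((∑ x, m x y) + ε * ∑ x, r x y)
            - Real.negMulLog (∑ x, m x y))
          - ∑ x, (Real.negMulLog (m x y + ε * r x y) - Real.negMulLog (m x y))))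
        ≤ ∑ y, (ε * ((∑ x, r x y) * (1 + |Real.log (∑ x, m x y)|)
            + ∑ x, r x y * (1 + |Real.log (m x y + r x y)|))
          + (if y = y₀ then ε * (r₀ * Real.log ε + r₀ * |Real.log r₀|) else 0)) :=
          Finset.sum_le_sum fun y _ => hrow y
      _ = _ := by
          rw [Finset.sum_add_distrib, Finset.sum_ite_eq' Finset.univ y₀, if_pos (Finset.mem_univ y₀),
            Finset.mul_sum]
  have hcomm : (∑ x, ∑ y, (Real.negMulLog (m x y + ε * r x y) - Real.negMulLog (m x y)))
      = ∑ y, ∑ x, (Real.negMulLog (m x y + ε * r x y) - Real.negMulLog (m x y)) :=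
    Finset.sum_comm
  have hlogε : r₀ * Real.log ε ≤ -(C + 1) := by
    have h1 : Real.log ε ≤ -(C + 1) / r₀ := by
      calc Real.log ε ≤ Real.log (Real.exp (-(C + 1) / r₀)) :=
            Real.log_le_log hε (min_le_right _ _)
        _ = -(C + 1) / r₀ := Real.log_exp _
    calc r₀ * Real.log ε ≤ r₀ * (-(C + 1) / r₀) :=
          mul_le_mul_of_nonneg_left h1 hr₀.le
      _ = -(C + 1) := by field_simp
  have habs : 0 ≤ r₀ * |Real.log r₀| := mul_nonneg hr₀.le (abs_nonneg _)
  calc ((∑ x, (Real.negMulLog ((∑ y, m x y) + ε * ∑ y, r x y) - Real.negMulLog (∑ y, m x y)))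
      + (∑ y, (Real.negMulLog ((∑ x, m x y) + ε * ∑ x, r x y) - Real.negMulLog (∑ x, m x y)))
      - (∑ x, ∑ y, (Real.negMulLog (m x y + ε * r x y) - Real.negMulLog (m x y)))
      - (Real.negMulLog ((∑ x, ∑ y, m x y) + ε * ∑ x, ∑ y, r x y)
          - Real.negMulLog (∑ x, ∑ y, m x y)))
      ≤ ε * (C + r₀ * Real.log ε) := by
        rw [hcomm]
        rw [hC]
        have := hT1
        have := hT23
        have := hT4
        nlinarith [hT1, hT23, hT4]
    _ ≤ ε * (-1) := by
        apply mul_le_mul_of_nonneg_left _ hε.le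
        linarith
    _ < 0 := by linarith

-- the mixing channel
noncomputable def mixCh {𝒵 : Type*} [DecidableEq 𝒵] (z z' : 𝒵) (ε : ℝ) : 𝒵 → 𝒵 → ℝ :=
  fun w u => if w = z then (if u = z then 1 - ε else if u = z' then ε else 0)
             else if u = w then 1 else 0

lemma mixCh_isChannel {𝒵 : Type*} [Fintype 𝒵] [DecidableEq 𝒵] {z z' : 𝒵}
    (hzz' : z ≠ z') {ε : ℝ} (hε : 0 ≤ ε) (hε1 : ε ≤ 1) : IsChannel (mixCh z z' ε) := by
  constructor
  · intro w u
    unfold mixCh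
    by_cases h1 : w = z <;> by_cases h2 : u = z <;> by_cases h3 : u = z' <;>
        simp_all <;> split <;> norm_num
  · intro w
    unfold mixCh
    by_cases h1 : w = z
    · simp only [if_pos h1]
      have hsplit : ∀ u : 𝒵, (if u = z then 1 - ε else if u = z' then ε else 0)
          = (if u = z then 1 - ε else 0) + (if u = z' then ε else 0) := by
        intro u
        by_cases h2 : u = z <;> by_cases h3 : u = z' <;> simp_all
      calc ∑ u, (if u = z then 1 - ε else if u = z' then ε else 0)
          = ∑ u, ((if u = z then 1 - ε else 0) + (if u = z' then ε else 0)) :=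
            Finset.sum_congr rfl fun u _ => hsplit u
        _ = 1 := by
            rw [Finset.sum_add_distrib, Finset.sum_ite_eq' Finset.univ z (fun _ => 1 - ε),
              Finset.sum_ite_eq' Finset.univ z' (fun _ => ε)]
            simp
    · simp only [if_neg h1]
      rw [Finset.sum_ite_eq' Finset.univ w (fun _ => (1:ℝ))]
      simp

section mixchform
variable {𝒳 𝒴 𝒵 : Type*} [Fintype 𝒵] [DecidableEq 𝒵] {z z' : 𝒵} {ε : ℝ}

lemma mixCh_e1 : mixCh z z' ε z z = 1 - ε := by
  unfold mixCh; rw [if_pos rfl, if_pos rfl]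

lemma mixCh_e2 (hzz' : z ≠ z') : mixCh z z' ε z z' = ε := by
  unfold mixCh; rw [if_pos rfl, if_neg (Ne.symm hzz'), if_pos rfl]

lemma mixCh_e3 (hzz' : z ≠ z') : mixCh z z' ε z' z' = 1 := by
  unfold mixCh; rw [if_neg (Ne.symm hzz'), if_pos rfl]

lemma mixCh_e5 {w u : 𝒵} (hw : w ≠ z) (hu : u ≠ w) : mixCh z z' ε w u = 0 := by
  unfold mixCh; rw [if_neg hw, if_neg hu]

lemma mixCh_e6 {u : 𝒵} (h1 : u ≠ z) (h2 : u ≠ z') : mixCh z z' ε z u = 0 := by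
  unfold mixCh; rw [if_pos rfl, if_neg h1, if_neg h2]

lemma mixCh_e7 {w : 𝒵} (hw : w ≠ z) : mixCh z z' ε w w = 1 := by
  unfold mixCh; rw [if_neg hw, if_pos rfl]

lemma applyChannel_mixCh (p : 𝒳 × 𝒴 × 𝒵 → ℝ) (hzz' : z ≠ z') (x : 𝒳) (y : 𝒴) (u : 𝒵) :
    applyChannel p (mixCh z z' ε) (x, y, u)
      = if u = z then (1 - ε) * p (x, y, z)
        else if u = z' then p (x, y, z') + ε * p (x, y, z) else p (x, y, u) := by
  show (∑ w, p (x, y, w) * mixCh z z' ε w u) = _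
  by_cases hu1 : u = z
  · rw [hu1, if_pos rfl]
    rw [Finset.sum_eq_single_of_mem z (Finset.mem_univ z)]
    · rw [mixCh_e1]; ring
    · intro w _ hw
      rw [mixCh_e5 hw (Ne.symm hw), mul_zero]
  · rw [if_neg hu1]
    by_cases hu2 : u = z'
    · rw [hu2, if_pos rfl]
      have hvan : ∀ w ∈ Finset.univ, w ∉ ({z, z'} : Finset 𝒵) →
          p (x, y, w) * mixCh z z' ε w z' = 0 := by
        intro w _ hw
        simp only [Finset.mem_insert, Finset.mem_singleton, not_or] at hw
        rw [mixCh_e5 hw.1 (Ne.symm hw.2), mul_zero]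
      rw [← Finset.sum_subset (Finset.subset_univ ({z, z'} : Finset 𝒵)) hvan,
        Finset.sum_pair hzz', mixCh_e2 hzz', mixCh_e3 hzz']
      ring
    · rw [if_neg hu2]
      rw [Finset.sum_eq_single_of_mem u (Finset.mem_univ u)]
      · rw [mixCh_e7 hu1, mul_one]
      · intro w _ hw
        by_cases hwz : w = z
        · rw [hwz, mixCh_e6 hu1 hu2, mul_zero]
        · rw [mixCh_e5 hwz (Ne.symm hw), mul_zero]

end mixchform

lemma slice_diff {𝒵 : Type*} [Fintype 𝒵] [DecidableEq 𝒵] {z z' : 𝒵} (hzz' : z ≠ z')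
    (F G : 𝒵 → ℝ) (ε : ℝ)
    (hG : ∀ u, G u = if u = z then (1 - ε) * F z
        else if u = z' then F z' + ε * F z else F u) :
    (∑ u, Real.negMulLog (G u)) - (∑ u, Real.negMulLog (F u))
      = (Real.negMulLog ((1 - ε) * F z) - Real.negMulLog (F z))
        + (Real.negMulLog (F z' + ε * F z) - Real.negMulLog (F z')) := by
  rw [← Finset.sum_sub_distrib]
  have hvanish : ∀ u ∈ Finset.univ, u ∉ ({z, z'} : Finset 𝒵) →
      Real.negMulLog (G u) - Real.negMulLog (F u) = 0 := by
    intro u _ hu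
    simp only [Finset.mem_insert, Finset.mem_singleton, not_or] at hu
    rw [hG u, if_neg hu.1, if_neg hu.2, sub_self]
  rw [← Finset.sum_subset (Finset.subset_univ ({z, z'} : Finset 𝒵)) hvanish]
  rw [Finset.sum_pair hzz']
  rw [hG z, hG z', if_pos rfl, if_neg (Ne.symm hzz'), if_pos rfl]

-- product identity : ∑∑ nml r = ∑ nml f + ∑ nml g - nml s
lemma prod_nml {𝒳 𝒴 : Type*} [Fintype 𝒳] [Fintype 𝒴] (r : 𝒳 → 𝒴 → ℝ)
    (hs : 0 < ∑ x, ∑ y, r x y)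
    (hprod : ∀ x y, r x y * (∑ x, ∑ y, r x y) = (∑ y', r x y') * (∑ x', r x' y)) :
    ∑ x, ∑ y, Real.negMulLog (r x y)
      = (∑ x, Real.negMulLog (∑ y, r x y)) + (∑ y, Real.negMulLog (∑ x, r x y))
        - Real.negMulLog (∑ x, ∑ y, r x y) := by
  set s : ℝ := ∑ x, ∑ y, r x y with hsdef
  have hsne : s ≠ 0 := ne_of_gt hs
  have hgsum : ∑ y, ∑ x, r x y = s := (Finset.sum_comm)
  have hinv : Real.negMulLog s⁻¹ = s⁻¹ * Real.log s := by
    simp [Real.negMulLog, Real.log_inv]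
  have hrform : ∀ x y, r x y = (∑ y', r x y') * ((∑ x', r x' y) * s⁻¹) := by
    intro x y
    field_simp
    linear_combination hprod x y
  have hterm : ∀ x y, Real.negMulLog (r x y)
      = ((∑ x', r x' y) * s⁻¹) * Real.negMulLog (∑ y', r x y')
        + (∑ y', r x y') * (s⁻¹ * Real.negMulLog (∑ x', r x' y)
            + (∑ x', r x' y) * (s⁻¹ * Real.log s)) := by
    intro x y
    rw [hrform x y, Real.negMulLog_mul, Real.negMulLog_mul, hinv]
    try ring
  calc ∑ x, ∑ y, Real.negMulLog (r x y)
      = ∑ x, ∑ y, (((∑ x', r x' y) * s⁻¹) * Real.negMulLog (∑ y', r x y')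
        + (∑ y', r x y') * (s⁻¹ * Real.negMulLog (∑ x', r x' y)
            + (∑ x', r x' y) * (s⁻¹ * Real.log s))) :=
        Finset.sum_congr rfl fun x _ => Finset.sum_congr rfl fun y _ => hterm x y
    _ = ∑ x, ((∑ y, ((∑ x', r x' y) * s⁻¹)) * Real.negMulLog (∑ y', r x y')
        + (∑ y', r x y') * (s⁻¹ * (∑ y, Real.negMulLog (∑ x', r x' y))
            + (∑ y, (∑ x', r x' y)) * (s⁻¹ * Real.log s))) := by
        apply Finset.sum_congr rfl
        intro x _
        rw [Finset.sum_add_distrib, ← Finset.sum_mul, ← Finset.mul_sum]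
        congr 1
        rw [Finset.sum_add_distrib, ← Finset.mul_sum, ← Finset.sum_mul]
    _ = ∑ x, (Real.negMulLog (∑ y', r x y')
        + (∑ y', r x y') * (s⁻¹ * (∑ y, Real.negMulLog (∑ x', r x' y)) + Real.log s)) := by
        apply Finset.sum_congr rfl
        intro x _
        have h1 : ∑ y, ((∑ x', r x' y) * s⁻¹) = 1 := by
          rw [← Finset.sum_mul, hgsum, mul_inv_cancel₀ hsne]
        have h2 : (∑ y, (∑ x', r x' y)) * (s⁻¹ * Real.log s) = Real.log s := by
          rw [hgsum, ← mul_assoc, mul_inv_cancel₀ hsne, one_mul]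
        rw [h1, h2, one_mul]
    _ = (∑ x, Real.negMulLog (∑ y, r x y)) + (∑ y, Real.negMulLog (∑ x, r x y))
        - Real.negMulLog s := by
        rw [Finset.sum_add_distrib, ← Finset.sum_mul]
        have hss : (∑ x, ∑ y', r x y') = s := rfl
        rw [hss]
        have hnmls : Real.negMulLog s = -(s * Real.log s) := by
          simp [Real.negMulLog]
        rw [hnmls]
        field_simp
        ring

section delta
variable {𝒳 𝒵 : Type*} [Fintype 𝒳] [Fintype 𝒵] [DecidableEq 𝒵]

lemma cmi3_mix_diff (p : 𝒳 × 𝒳 × 𝒵 → ℝ) {z z' : 𝒵} (hzz' : z ≠ z') (ε : ℝ)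
    (hz : 0 < ∑ x, ∑ y, p (x, y, z))
    (hprod : ∀ x y, p (x, y, z) * (∑ x', ∑ y', p (x', y', z)) =
        (∑ y', p (x, y', z)) * (∑ x', p (x', y, z))) :
    cmi3 (applyChannel p (mixCh z z' ε)) - cmi3 p =
      (∑ x, (Real.negMulLog ((∑ y, p (x, y, z')) + ε * ∑ y, p (x, y, z))
          - Real.negMulLog (∑ y, p (x, y, z'))))
      + (∑ y, (Real.negMulLog ((∑ x, p (x, y, z')) + ε * ∑ x, p (x, y, z))
          - Real.negMulLog (∑ x, p (x, y, z'))))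
      - (∑ x, ∑ y, (Real.negMulLog (p (x, y, z') + ε * p (x, y, z))
          - Real.negMulLog (p (x, y, z'))))
      - (Real.negMulLog ((∑ x, ∑ y, p (x, y, z')) + ε * ∑ x, ∑ y, p (x, y, z))
          - Real.negMulLog (∑ x, ∑ y, p (x, y, z'))) := by
  set q := applyChannel p (mixCh z z' ε) with hqdef
  have hq : ∀ x y u, q (x, y, u) = if u = z then (1 - ε) * p (x, y, z)
      else if u = z' then p (x, y, z') + ε * p (x, y, z) else p (x, y, u) :=
    fun x y u => applyChannel_mixCh p hzz' x y u
  -- E1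
  have hE1 : ent1 (fun xz : 𝒳 × 𝒵 => ∑ y, q (xz.1, y, xz.2))
      - ent1 (fun xz : 𝒳 × 𝒵 => ∑ y, p (xz.1, y, xz.2))
      = ∑ x, ((Real.negMulLog ((1 - ε) * ∑ y, p (x, y, z)) - Real.negMulLog (∑ y, p (x, y, z)))
        + (Real.negMulLog ((∑ y, p (x, y, z')) + ε * ∑ y, p (x, y, z))
          - Real.negMulLog (∑ y, p (x, y, z')))) := by
    unfold ent1
    rw [Fintype.sum_prod_type, Fintype.sum_prod_type, ← Finset.sum_sub_distrib]
    apply Finset.sum_congr rfl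
    intro x _
    apply slice_diff hzz' (fun u => ∑ y, p (x, y, u)) (fun u => ∑ y, q (x, y, u)) ε
    intro u
    simp only [hq]
    by_cases h1 : u = z
    · simp only [if_pos h1]; rw [Finset.mul_sum]
    · by_cases h2 : u = z'
      · simp only [if_neg h1, if_pos h2]; rw [Finset.sum_add_distrib, Finset.mul_sum]
      · simp only [if_neg h1, if_neg h2]
  -- E2
  have hE2 : ent1 (fun yz : 𝒳 × 𝒵 => ∑ x, q (x, yz.1, yz.2))
      - ent1 (fun yz : 𝒳 × 𝒵 => ∑ x, p (x, yz.1, yz.2))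
      = ∑ y, ((Real.negMulLog ((1 - ε) * ∑ x, p (x, y, z)) - Real.negMulLog (∑ x, p (x, y, z)))
        + (Real.negMulLog ((∑ x, p (x, y, z')) + ε * ∑ x, p (x, y, z))
          - Real.negMulLog (∑ x, p (x, y, z')))) := by
    unfold ent1
    rw [Fintype.sum_prod_type, Fintype.sum_prod_type, ← Finset.sum_sub_distrib]
    apply Finset.sum_congr rfl
    intro y _
    apply slice_diff hzz' (fun u => ∑ x, p (x, y, u)) (fun u => ∑ x, q (x, y, u)) ε
    intro u
    simp only [hq]
    by_cases h1 : u = z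
    · simp only [if_pos h1]; rw [Finset.mul_sum]
    · by_cases h2 : u = z'
      · simp only [if_neg h1, if_pos h2]; rw [Finset.sum_add_distrib, Finset.mul_sum]
      · simp only [if_neg h1, if_neg h2]
  -- E3
  have hE3 : ent1 q - ent1 p
      = ∑ x, ∑ y, ((Real.negMulLog ((1 - ε) * p (x, y, z)) - Real.negMulLog (p (x, y, z)))
        + (Real.negMulLog (p (x, y, z') + ε * p (x, y, z))
          - Real.negMulLog (p (x, y, z')))) := by
    unfold ent1
    rw [Fintype.sum_prod_type, Fintype.sum_prod_type, ← Finset.sum_sub_distrib]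
    apply Finset.sum_congr rfl
    intro x _
    rw [Fintype.sum_prod_type, Fintype.sum_prod_type, ← Finset.sum_sub_distrib]
    apply Finset.sum_congr rfl
    intro y _
    apply slice_diff hzz' (fun u => p (x, y, u)) (fun u => q (x, y, u)) ε
    intro u
    exact hq x y u
  -- E4
  have hE4 : ent1 (fun u : 𝒵 => ∑ x, ∑ y, q (x, y, u))
      - ent1 (fun u : 𝒵 => ∑ x, ∑ y, p (x, y, u))
      = (Real.negMulLog ((1 - ε) * ∑ x, ∑ y, p (x, y, z))
          - Real.negMulLog (∑ x, ∑ y, p (x, y, z)))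
        + (Real.negMulLog ((∑ x, ∑ y, p (x, y, z')) + ε * ∑ x, ∑ y, p (x, y, z))
          - Real.negMulLog (∑ x, ∑ y, p (x, y, z'))) := by
    unfold ent1
    apply slice_diff hzz' (fun u => ∑ x, ∑ y, p (x, y, u)) (fun u => ∑ x, ∑ y, q (x, y, u)) ε
    intro u
    simp only [hq]
    by_cases h1 : u = z
    · simp only [if_pos h1, ← Finset.mul_sum]
    · by_cases h2 : u = z'
      · simp only [if_neg h1, if_pos h2, Finset.sum_add_distrib, ← Finset.mul_sum]
      · simp only [if_neg h1, if_neg h2]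
  -- scale part vanishes
  have hNr : ∑ x, ∑ y, Real.negMulLog (p (x, y, z))
      = (∑ x, Real.negMulLog (∑ y, p (x, y, z)))
        + (∑ y, Real.negMulLog (∑ x, p (x, y, z)))
        - Real.negMulLog (∑ x, ∑ y, p (x, y, z)) :=
    prod_nml (fun x y => p (x, y, z)) hz hprod
  have hscale : (∑ x, (Real.negMulLog ((1 - ε) * ∑ y, p (x, y, z))
        - Real.negMulLog (∑ y, p (x, y, z))))
      + (∑ y, (Real.negMulLog ((1 - ε) * ∑ x, p (x, y, z))
        - Real.negMulLog (∑ x, p (x, y, z))))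
      - (∑ x, ∑ y, (Real.negMulLog ((1 - ε) * p (x, y, z)) - Real.negMulLog (p (x, y, z))))
      - (Real.negMulLog ((1 - ε) * ∑ x, ∑ y, p (x, y, z))
        - Real.negMulLog (∑ x, ∑ y, p (x, y, z))) = 0 := by
    have hmul : ∀ a : ℝ, Real.negMulLog ((1 - ε) * a) - Real.negMulLog a
        = a * Real.negMulLog (1 - ε) - ε * Real.negMulLog a := by
      intro a
      rw [Real.negMulLog_mul]
      ring
    have h1 : (∑ x, (Real.negMulLog ((1 - ε) * ∑ y, p (x, y, z))
          - Real.negMulLog (∑ y, p (x, y, z))))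
        = (∑ x, ∑ y, p (x, y, z)) * Real.negMulLog (1 - ε)
          - ε * ∑ x, Real.negMulLog (∑ y, p (x, y, z)) := by
      rw [Finset.sum_congr rfl (fun x _ => hmul (∑ y, p (x, y, z))),
        Finset.sum_sub_distrib, ← Finset.sum_mul, ← Finset.mul_sum]
    have h2 : (∑ y, (Real.negMulLog ((1 - ε) * ∑ x, p (x, y, z))
          - Real.negMulLog (∑ x, p (x, y, z))))
        = (∑ x, ∑ y, p (x, y, z)) * Real.negMulLog (1 - ε)
          - ε * ∑ y, Real.negMulLog (∑ x, p (x, y, z)) := by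
      rw [Finset.sum_congr rfl (fun y _ => hmul (∑ x, p (x, y, z))),
        Finset.sum_sub_distrib, ← Finset.sum_mul, ← Finset.mul_sum]
      rw [show ∑ y, ∑ x, p (x, y, z) = ∑ x, ∑ y, p (x, y, z) from Finset.sum_comm]
    have h3 : (∑ x, ∑ y, (Real.negMulLog ((1 - ε) * p (x, y, z)) - Real.negMulLog (p (x, y, z))))
        = (∑ x, ∑ y, p (x, y, z)) * Real.negMulLog (1 - ε)
          - ε * ∑ x, ∑ y, Real.negMulLog (p (x, y, z)) := by
      have : ∀ x : 𝒳, (∑ y, (Real.negMulLog ((1 - ε) * p (x, y, z)) - Real.negMulLog (p (x, y, z))))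
          = (∑ y, p (x, y, z)) * Real.negMulLog (1 - ε)
            - ε * ∑ y, Real.negMulLog (p (x, y, z)) := by
        intro x
        rw [Finset.sum_congr rfl (fun y _ => hmul (p (x, y, z))),
          Finset.sum_sub_distrib, ← Finset.sum_mul, ← Finset.mul_sum]
      rw [Finset.sum_congr rfl (fun x _ => this x), Finset.sum_sub_distrib,
        ← Finset.sum_mul, ← Finset.mul_sum]
    have h4 : Real.negMulLog ((1 - ε) * ∑ x, ∑ y, p (x, y, z))
          - Real.negMulLog (∑ x, ∑ y, p (x, y, z))
        = (∑ x, ∑ y, p (x, y, z)) * Real.negMulLog (1 - ε)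
          - ε * Real.negMulLog (∑ x, ∑ y, p (x, y, z)) := hmul _
    rw [h1, h2, h3, h4, hNr]
    ring
  -- assemble
  have hcmi : cmi3 q - cmi3 p
      = (ent1 (fun xz : 𝒳 × 𝒵 => ∑ y, q (xz.1, y, xz.2))
          - ent1 (fun xz : 𝒳 × 𝒵 => ∑ y, p (xz.1, y, xz.2)))
        + (ent1 (fun yz : 𝒳 × 𝒵 => ∑ x, q (x, yz.1, yz.2))
          - ent1 (fun yz : 𝒳 × 𝒵 => ∑ x, p (x, yz.1, yz.2)))
        - (ent1 q - ent1 p)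
        - (ent1 (fun u : 𝒵 => ∑ x, ∑ y, q (x, y, u))
          - ent1 (fun u : 𝒵 => ∑ x, ∑ y, p (x, y, u))) := by
    unfold cmi3
    ring
  rw [hcmi, hE1, hE2, hE3, hE4]
  rw [Finset.sum_add_distrib, Finset.sum_add_distrib,
    show (∑ x, ∑ y, ((Real.negMulLog ((1 - ε) * p (x, y, z)) - Real.negMulLog (p (x, y, z)))
        + (Real.negMulLog (p (x, y, z') + ε * p (x, y, z)) - Real.negMulLog (p (x, y, z')))))
      = (∑ x, ∑ y, (Real.negMulLog ((1 - ε) * p (x, y, z)) - Real.negMulLog (p (x, y, z))))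
        + (∑ x, ∑ y, (Real.negMulLog (p (x, y, z') + ε * p (x, y, z))
            - Real.negMulLog (p (x, y, z')))) by
      rw [← Finset.sum_add_distrib]
      exact Finset.sum_congr rfl fun x _ => Finset.sum_add_distrib]
  linarith [hscale]

end delta

section branch
variable {𝒳 𝒵 : Type*} [Fintype 𝒳] [Fintype 𝒵]

lemma exists_channel_lt [DecidableEq 𝒵] (p : 𝒳 × 𝒳 × 𝒵 → ℝ) (hp0 : ∀ ω, 0 ≤ p ω)
    {z z' : 𝒵} (hzz' : z ≠ z')
    (hz : 0 < ∑ x, ∑ y, p (x, y, z))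
    (hprod : ∀ x y, p (x, y, z) * (∑ x', ∑ y', p (x', y', z)) =
        (∑ y', p (x, y', z)) * (∑ x', p (x', y, z)))
    (hsX : ∀ x, 0 < ∑ y, p (x, y, z) → 0 < ∑ y, p (x, y, z'))
    (x₀ y₀ : 𝒳) (hr₀ : 0 < p (x₀, y₀, z)) (hm₀ : p (x₀, y₀, z') = 0)
    (hdy₀ : 0 < ∑ x, p (x, y₀, z')) :
    ∃ c : 𝒵 → 𝒵 → ℝ, IsChannel c ∧ cmi3 (applyChannel p c) < cmi3 p := by
  obtain ⟨ε, hε0, hε1, hlt⟩ := key (fun x y => p (x, y, z)) (fun x y => p (x, y, z'))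
    (fun x y => hp0 _) (fun x y => hp0 _) x₀ y₀ hr₀ hm₀ hdy₀ hsX
  refine ⟨mixCh z z' ε, mixCh_isChannel hzz' hε0.le hε1, ?_⟩
  have hdiff := cmi3_mix_diff p hzz' ε hz hprod
  linarith [hdiff, hlt]

lemma cmi3_comm (p : 𝒳 × 𝒳 × 𝒵 → ℝ) :
    cmi3 (fun a : 𝒳 × 𝒳 × 𝒵 => p (a.2.1, a.1, a.2.2)) = cmi3 p := by
  unfold cmi3
  have h3 : ent1 (fun a : 𝒳 × 𝒳 × 𝒵 => p (a.2.1, a.1, a.2.2)) = ent1 p := by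
    unfold ent1
    apply Fintype.sum_equiv ⟨fun a : 𝒳 × 𝒳 × 𝒵 => (a.2.1, a.1, a.2.2),
      fun a : 𝒳 × 𝒳 × 𝒵 => (a.2.1, a.1, a.2.2), fun a => rfl, fun a => rfl⟩
    intro a
    rfl
  have h4 : ent1 (fun u : 𝒵 => ∑ x, ∑ y, p (y, x, u)) = ent1 (fun u : 𝒵 => ∑ x, ∑ y, p (x, y, u)) := by
    unfold ent1
    apply Finset.sum_congr rfl
    intro u _
    show (∑ x, ∑ y, p (y, x, u)).negMulLog = (∑ x, ∑ y, p (x, y, u)).negMulLog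
    rw [show (∑ x, ∑ y, p (y, x, u)) = ∑ x, ∑ y, p (x, y, u) from Finset.sum_comm]
  rw [h3]
  rw [show ent1 (fun u : 𝒵 => ∑ x, ∑ y, (fun a : 𝒳 × 𝒳 × 𝒵 => p (a.2.1, a.1, a.2.2)) (x, y, u))
      = ent1 (fun u : 𝒵 => ∑ x, ∑ y, p (x, y, u)) from h4]
  ring

lemma applyChannel_nonneg (p : 𝒳 × 𝒳 × 𝒵 → ℝ) (hp0 : ∀ ω, 0 ≤ p ω)
    (c : 𝒵 → 𝒵 → ℝ) (hc : IsChannel c) : ∀ ω, 0 ≤ applyChannel p c ω := by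
  intro ω
  exact Finset.sum_nonneg fun w _ => mul_nonneg (hp0 _) (hc.1 w ω.2.2)

lemma applyChannel_sum (p : 𝒳 × 𝒳 × 𝒵 → ℝ) (hp1 : ∑ ω, p ω = 1)
    (c : 𝒵 → 𝒵 → ℝ) (hc : IsChannel c) : ∑ ω, applyChannel p c ω = 1 := by
  rw [Fintype.sum_prod_type]
  have : ∀ x : 𝒳, ∑ b : 𝒳 × 𝒵, applyChannel p c (x, b)
      = ∑ y : 𝒳, ∑ w : 𝒵, p (x, y, w) := by
    intro x
    rw [Fintype.sum_prod_type]
    apply Finset.sum_congr rfl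
    intro y _
    show (∑ u, ∑ w, p (x, y, w) * c w u) = _
    rw [Finset.sum_comm]
    apply Finset.sum_congr rfl
    intro w _
    rw [← Finset.mul_sum, hc.2 w, mul_one]
  rw [Finset.sum_congr rfl fun x _ => this x]
  rw [← hp1, Fintype.sum_prod_type]
  apply Finset.sum_congr rfl
  intro x _
  rw [Fintype.sum_prod_type]

lemma sum_sq_le_one {q : 𝒳 × 𝒳 × 𝒵 → ℝ} (hq0 : ∀ ω, 0 ≤ q ω) (hq1 : ∑ ω, q ω = 1)
    (x : 𝒳) (u : 𝒵) : ∑ y, q (x, y, u) ≤ 1 := by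
  rw [← hq1, Fintype.sum_prod_type]
  have h1 : ∑ y, q (x, y, u) ≤ ∑ b : 𝒳 × 𝒵, q (x, b) := by
    rw [Fintype.sum_prod_type]
    apply Finset.sum_le_sum
    intro y _
    exact Finset.single_le_sum (fun w _ => hq0 (x, y, w)) (Finset.mem_univ u)
  calc ∑ y, q (x, y, u) ≤ ∑ b : 𝒳 × 𝒵, q (x, b) := h1
    _ ≤ ∑ a : 𝒳, ∑ b : 𝒳 × 𝒵, q (a, b) :=
      Finset.single_le_sum (fun a _ => Finset.sum_nonneg fun b _ => hq0 (a, b))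
        (Finset.mem_univ x)

lemma sum_sq_le_one' {q : 𝒳 × 𝒳 × 𝒵 → ℝ} (hq0 : ∀ ω, 0 ≤ q ω) (hq1 : ∑ ω, q ω = 1)
    (y : 𝒳) (u : 𝒵) : ∑ x, q (x, y, u) ≤ 1 := by
  rw [← hq1, Fintype.sum_prod_type]
  apply Finset.sum_le_sum
  intro x _
  rw [Fintype.sum_prod_type]
  calc q (x, y, u) ≤ ∑ w, q (x, y, w) :=
        Finset.single_le_sum (fun w _ => hq0 (x, y, w)) (Finset.mem_univ u)
    _ ≤ ∑ b : 𝒳, ∑ w, q (x, b, w) :=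
        Finset.single_le_sum (fun b _ => Finset.sum_nonneg fun w _ => hq0 (x, b, w))
          (Finset.mem_univ y)

lemma cmi3_lower_bound (q : 𝒳 × 𝒳 × 𝒵 → ℝ) (hq0 : ∀ ω, 0 ≤ q ω) (hq1 : ∑ ω, q ω = 1) :
    -((Fintype.card (𝒳 × 𝒳 × 𝒵) : ℝ) * Real.exp (-1)
      + (Fintype.card 𝒵 : ℝ) * Real.exp (-1)) ≤ cmi3 q := by
  unfold cmi3
  have he1 : 0 ≤ ent1 (fun xz : 𝒳 × 𝒵 => ∑ y, q (xz.1, y, xz.2)) := by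
    apply Finset.sum_nonneg
    intro a _
    exact Real.negMulLog_nonneg (Finset.sum_nonneg fun y _ => hq0 _)
      (sum_sq_le_one hq0 hq1 a.1 a.2)
  have he2 : 0 ≤ ent1 (fun yz : 𝒳 × 𝒵 => ∑ x, q (x, yz.1, yz.2)) := by
    apply Finset.sum_nonneg
    intro a _
    exact Real.negMulLog_nonneg (Finset.sum_nonneg fun x _ => hq0 _)
      (sum_sq_le_one' hq0 hq1 a.1 a.2)
  have he3 : ent1 q ≤ (Fintype.card (𝒳 × 𝒳 × 𝒵) : ℝ) * Real.exp (-1) := by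
    unfold ent1
    calc ∑ a, Real.negMulLog (q a) ≤ ∑ _a : 𝒳 × 𝒳 × 𝒵, Real.exp (-1) :=
          Finset.sum_le_sum fun a _ => negMulLog_le_exp_neg_one (hq0 a)
      _ = (Fintype.card (𝒳 × 𝒳 × 𝒵) : ℝ) * Real.exp (-1) := by
          rw [Finset.sum_const, Finset.card_univ, nsmul_eq_mul]
  have he4 : ent1 (fun u : 𝒵 => ∑ x, ∑ y, q (x, y, u))
      ≤ (Fintype.card 𝒵 : ℝ) * Real.exp (-1) := by
    unfold ent1
    calc ∑ u, Real.negMulLog (∑ x, ∑ y, q (x, y, u))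
        ≤ ∑ _u : 𝒵, Real.exp (-1) :=
          Finset.sum_le_sum fun u _ => negMulLog_le_exp_neg_one
            (Finset.sum_nonneg fun x _ => Finset.sum_nonneg fun y _ => hq0 _)
      _ = (Fintype.card 𝒵 : ℝ) * Real.exp (-1) := by
          rw [Finset.sum_const, Finset.card_univ, nsmul_eq_mul]
  linarith

end branch

end Aux

open Real Finset

set_option maxHeartbeats 1000000 in
/-- if `p_{XY|Z=z'}` is perfectly correlated (diagonal), `p_{XY|Z=z}` is a
product distribution for some `z ≠ z'` whose `X`- or `Y`-marginal support is contained in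
that of `p_{XY|Z=z'}`, and some pair `(x,y)` has `p(x,y|z) > 0`, `p(x|z') p(y|z') > 0`
but `p(x,y|z') = 0`, then the intrinsic information is strictly below `I(X:Y|Z)`. -/
theorem intrinsic_lt_cmi_of_correlated_vs_product
    {𝒳 𝒵 : Type*} [Fintype 𝒳] [Fintype 𝒵]
    (p : 𝒳 × 𝒳 × 𝒵 → ℝ) (hp : IsProb p)
    (z z' : 𝒵) (hzz' : z ≠ z')
    (hz : 0 < ∑ x, ∑ y, p (x, y, z)) (hz' : 0 < ∑ x, ∑ y, p (x, y, z'))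
    -- `p_{XY|Z=z'}` is perfectly correlated (supported on the diagonal):
    (hcorr : ∀ x y : 𝒳, x ≠ y → p (x, y, z') = 0)
    -- `p_{XY|Z=z}` is a product distribution:
    (hprod : ∀ x y : 𝒳,
      p (x, y, z) * (∑ x', ∑ y', p (x', y', z)) =
        (∑ y', p (x, y', z)) * (∑ x', p (x', y, z)))
    -- support inclusion of a marginal:
    (hsupp : (∀ x : 𝒳, 0 < ∑ y', p (x, y', z) → 0 < ∑ y', p (x, y', z')) ∨
             (∀ y : 𝒳, 0 < ∑ x', p (x', y, z) → 0 < ∑ x', p (x', y, z')))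
    (x y : 𝒳)
    (hxy : 0 < p (x, y, z))
    (hmarg : 0 < (∑ y', p (x, y', z')) * (∑ x', p (x', y, z')))
    (hzero : p (x, y, z') = 0) :
    sInf {m : ℝ | ∃ c : 𝒵 → 𝒵 → ℝ, IsChannel c ∧ m = cmi3 (applyChannel p c)} <
      cmi3 p := by
  classical
  obtain ⟨hp0, hp1⟩ := hp
  have hmarg1 : 0 < ∑ y', p (x, y', z') := by
    rcases mul_pos_iff.mp hmarg with ⟨ha, _⟩ | ⟨ha, _⟩
    · exact ha
    · exact absurd ha (not_lt.mpr (Finset.sum_nonneg fun y' _ => hp0 _))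
  have hmarg2 : 0 < ∑ x', p (x', y, z') := by
    rcases mul_pos_iff.mp hmarg with ⟨_, hb⟩ | ⟨_, hb⟩
    · exact hb
    · exact absurd hb (not_lt.mpr (Finset.sum_nonneg fun x' _ => hp0 _))
  obtain ⟨c, hc, hlt⟩ : ∃ c : 𝒵 → 𝒵 → ℝ, IsChannel c ∧
      cmi3 (applyChannel p c) < cmi3 p := by
    rcases hsupp with hX | hY
    · exact exists_channel_lt p hp0 hzz' hz hprod hX x y hxy hzero hmarg2
    · set p' : 𝒳 × 𝒳 × 𝒵 → ℝ := fun a => p (a.2.1, a.1, a.2.2) with hp'def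
      have h0' : ∀ ω, 0 ≤ p' ω := fun ω => hp0 _
      have hz2 : 0 < ∑ a, ∑ b, p' (a, b, z) := by
        show 0 < ∑ a, ∑ b, p (b, a, z)
        rw [show (∑ a, ∑ b, p (b, a, z)) = ∑ a, ∑ b, p (a, b, z) from Finset.sum_comm]
        exact hz
      have hprod' : ∀ a b, p' (a, b, z) * (∑ a', ∑ b', p' (a', b', z)) =
          (∑ b', p' (a, b', z)) * (∑ a', p' (a', b, z)) := by
        intro a b
        show p (b, a, z) * (∑ a', ∑ b', p (b', a', z))
          = (∑ b', p (b', a, z)) * (∑ a', p (b, a', z))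
        rw [show (∑ a', ∑ b', p (b', a', z)) = ∑ a', ∑ b', p (a', b', z) from
          Finset.sum_comm]
        rw [hprod b a]
        exact mul_comm _ _
      have hsX' : ∀ a, 0 < ∑ b, p' (a, b, z) → 0 < ∑ b, p' (a, b, z') := by
        intro a
        show 0 < ∑ b, p (b, a, z) → 0 < ∑ b, p (b, a, z')
        exact hY a
      obtain ⟨c, hc, hlt⟩ := exists_channel_lt p' h0' hzz' hz2 hprod' hsX' y x
        (show 0 < p' (y, x, z) from hxy) (show p' (y, x, z') = 0 from hzero)
        (show 0 < ∑ b, p (x, b, z') from hmarg1)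
      refine ⟨c, hc, ?_⟩
      have htrans : applyChannel p' c
          = fun a : 𝒳 × 𝒳 × 𝒵 => applyChannel p c (a.2.1, a.1, a.2.2) := rfl
      rw [htrans, cmi3_comm (applyChannel p c), cmi3_comm p] at hlt
      exact hlt
  have hmem : cmi3 (applyChannel p c)
      ∈ {m : ℝ | ∃ c : 𝒵 → 𝒵 → ℝ, IsChannel c ∧ m = cmi3 (applyChannel p c)} :=
    ⟨c, hc, rfl⟩
  have hbdd : BddBelow {m : ℝ | ∃ c : 𝒵 → 𝒵 → ℝ, IsChannel c ∧
      m = cmi3 (applyChannel p c)} := by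
    refine ⟨-((Fintype.card (𝒳 × 𝒳 × 𝒵) : ℝ) * Real.exp (-1)
      + (Fintype.card 𝒵 : ℝ) * Real.exp (-1)), ?_⟩
    rintro m ⟨c', hc', rfl⟩
    exact cmi3_lower_bound _ (applyChannel_nonneg p hp0 c' hc')
      (applyChannel_sum p hp1 c' hc')
  exact lt_of_le_of_lt (csInf_le hbdd hmem) hlt
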